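/- Hopf-Lax subsolution with countably many base points: Let X be a metric space of finite diameter with finite Borel measure m, let f be bounded continuous on X, let {x_i} be a sequence in X, and define Q_t^n f(x) = min_{1 ≤ i ≤ n} [f(x_i) + d²(x, x_i)/(2t)] for t > 0. Then Q_t^n f is locally Lipschitz in (0,∞) × X and satisfies (d/dt) Q_t^n f + ½ Lip_a²(Q_t^n f) ≤ 0 at L¹×m-a.e. (t, x), where Lip_a denotes the asymptotic Lipschitz constant. -/

import Mathlib

open MeasureTheory Filter Metric Set
open scoped ENNReal Topology NNReal

/-- The asymptotic Lipschitz constant `Lip_a f (x) = inf_{r>0} Lip(f|_{B_r(x)})`. -/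
noncomputable def asympLip {X : Type*} [MetricSpace X] (f : X → ℝ) (x : X) : ℝ :=
  sInf {K : ℝ | 0 ≤ K ∧ ∃ r > (0:ℝ), LipschitzOnWith (Real.toNNReal K) f (Metric.ball x r)}

/-- The discrete Hopf–Lax function
`Q_t^n f (x) = min_{1 ≤ i ≤ n} [f(x_i) + d²(x,x_i)/(2t)]`. -/
noncomputable def QHL {X : Type*} [MetricSpace X] (f : X → ℝ) (xi : ℕ → X) (n : ℕ)
    (t : ℝ) (x : X) : ℝ :=
  ⨅ i : Fin n, (f (xi i) + dist x (xi i) ^ 2 / (2 * t))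


lemma abs_inf'_sub_inf'_le {ι : Type*} (s : Finset ι) (hs : s.Nonempty) (u v : ι → ℝ) {B : ℝ}
    (h : ∀ i ∈ s, |u i - v i| ≤ B) : |s.inf' hs u - s.inf' hs v| ≤ B := by
  obtain ⟨j, hj, hju⟩ := s.exists_mem_eq_inf' hs u
  obtain ⟨k, hk, hkv⟩ := s.exists_mem_eq_inf' hs v
  have h1 := s.inf'_le u hk
  have h2 := s.inf'_le v hj
  have h3 := abs_le.1 (h j hj)
  have h4 := abs_le.1 (h k hk)
  rw [abs_le]
  constructor <;> [linarith [hju, hkv, h1, h2, h3.1, h3.2, h4.1, h4.2];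
    linarith [hju, hkv, h1, h2, h3.1, h3.2, h4.1, h4.2]]

lemma hl_branch_bound {A B t s τ C : ℝ} (hτ : 0 < τ) (ht : τ ≤ t) (hs : τ ≤ s)
    (hB0 : 0 ≤ B) (hBC : B ≤ C^2) :
    |A/(2*t) - B/(2*s)| ≤ |A - B|/(2*τ) + C^2*|t-s|/(2*(τ*τ)) := by
  have ht0 : 0 < t := hτ.trans_le ht
  have hs0 : 0 < s := hτ.trans_le hs
  have key : A/(2*t) - B/(2*s) = (A-B)/(2*t) + B*(s-t)/(2*(t*s)) := by
    field_simp; ring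
  rw [key]
  calc |(A-B)/(2*t) + B*(s-t)/(2*(t*s))| ≤ |(A-B)/(2*t)| + |B*(s-t)/(2*(t*s))| := abs_add_le _ _
    _ = |A-B|/(2*t) + B*|s-t|/(2*(t*s)) := by
        rw [abs_div, abs_div, abs_mul B (s-t), abs_of_nonneg hB0,
          abs_of_pos (by positivity : (0:ℝ) < 2*t), abs_of_pos (by positivity : (0:ℝ) < 2*(t*s))]
    _ ≤ |A-B|/(2*τ) + C^2*|t-s|/(2*(τ*τ)) := by
        rw [abs_sub_comm s t]
        gcongr
        all_goals nlinarith [abs_nonneg (t-s), abs_nonneg (A-B)]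

lemma qhl_inf' {X : Type*} [MetricSpace X] (f : X → ℝ) (xi : ℕ → X) (n : ℕ) (hn : 0 < n)
    (t : ℝ) (x : X) :
    QHL f xi n t x = (Finset.univ : Finset (Fin n)).inf'
      ⟨⟨0, hn⟩, Finset.mem_univ _⟩ (fun i => f (xi i) + dist x (xi i) ^ 2 / (2 * t)) := by
  haveI : Nonempty (Fin n) := ⟨⟨0, hn⟩⟩
  rw [QHL, ← Finset.inf'_univ_eq_ciInf]


lemma qhl_badset_null {X : Type*} [MetricSpace X] [MeasurableSpace X] [BorelSpace X]
    (m : Measure X) [IsFiniteMeasure m] (f : X → ℝ) (xi : ℕ → X) (n : ℕ) :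
    ((volume.restrict (Set.Ioi (0:ℝ))).prod m)
      {p : ℝ × X | ∃ i j : Fin n, dist p.2 (xi i) ≠ dist p.2 (xi j) ∧
        f (xi i) + dist p.2 (xi i)^2/(2*p.1) = f (xi j) + dist p.2 (xi j)^2/(2*p.1)} = 0 := by
  set μ := volume.restrict (Set.Ioi (0:ℝ)) with hμ
  set S : Set (ℝ × X) := {p : ℝ × X | ∃ i j : Fin n, dist p.2 (xi i) ≠ dist p.2 (xi j) ∧
        f (xi i) + dist p.2 (xi i)^2/(2*p.1) = f (xi j) + dist p.2 (xi j)^2/(2*p.1)} with hS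
  have hmeasf : ∀ i : Fin n, Measurable (fun p : ℝ × X =>
      f (xi i) + dist p.2 (xi i)^2/(2*p.1)) := by
    intro i
    apply Measurable.add measurable_const
    apply Measurable.div
    · exact ((continuous_snd.dist continuous_const).pow 2).measurable
    · exact measurable_const.mul measurable_fst
  have hmeas : MeasurableSet S := by
    have : S = ⋃ i : Fin n, ⋃ j : Fin n,
        ({p : ℝ × X | dist p.2 (xi i) = dist p.2 (xi j)}ᶜ ∩
         {p : ℝ × X | f (xi i) + dist p.2 (xi i)^2/(2*p.1)
            = f (xi j) + dist p.2 (xi j)^2/(2*p.1)}) := by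
      ext p; simp [hS, Set.mem_iUnion, Set.mem_inter_iff]
    rw [this]
    refine MeasurableSet.iUnion fun i => MeasurableSet.iUnion fun j => MeasurableSet.inter ?_ ?_
    · exact (measurableSet_eq_fun (continuous_snd.dist continuous_const).measurable
        (continuous_snd.dist continuous_const).measurable).compl
    · exact measurableSet_eq_fun (hmeasf i) (hmeasf j)
  rw [Measure.prod_apply_symm hmeas]
  have hsec : ∀ x : X, μ ((fun t => (t, x)) ⁻¹' S) = 0 := by
    intro x
    have hsub : ((fun t => (t, x)) ⁻¹' S) ⊆
        ⋃ i : Fin n, ⋃ j : Fin n,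
          ({0} ∪ {(dist x (xi i)^2 - dist x (xi j)^2)/(2*(f (xi j) - f (xi i)))} : Set ℝ) := by
      intro t ht
      simp only [Set.mem_preimage, hS, Set.mem_setOf_eq] at ht
      obtain ⟨i, j, hne, heq⟩ := ht
      
      simp only [Set.mem_iUnion]
      refine ⟨i, j, ?_⟩
      rcases eq_or_ne t 0 with rfl | ht0
      · exact Or.inl rfl
      right
      have h2t : (2*t) ≠ 0 := by simpa using ht0
      have hb : dist x (xi i)^2 ≠ dist x (xi j)^2 := by
        intro h
        apply hne
        have h1 : dist x (xi i) = Real.sqrt (dist x (xi i)^2) := (Real.sqrt_sq dist_nonneg).symm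
        have h2 : dist x (xi j) = Real.sqrt (dist x (xi j)^2) := (Real.sqrt_sq dist_nonneg).symm
        rw [h1, h2, h]
      have hdiv : (dist x (xi i)^2 - dist x (xi j)^2)/(2*t) = f (xi j) - f (xi i) := by
        rw [sub_div]; linarith [heq]
      have heq' : dist x (xi i)^2 - dist x (xi j)^2 = (f (xi j) - f (xi i)) * (2*t) :=
        (div_eq_iff h2t).mp hdiv
      have hfne : f (xi j) - f (xi i) ≠ 0 := by
        intro h
        apply hb
        rw [h, zero_mul] at heq'
        linarith [heq']
      have hfne2 : (2*(f (xi j) - f (xi i))) ≠ 0 := by simpa using hfne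
      simp only [Set.mem_singleton_iff]
      rw [eq_div_iff hfne2]
      linear_combination -heq'
    refine measure_mono_null hsub ?_
    refine measure_iUnion_null fun i => measure_iUnion_null fun j => measure_union_null ?_ ?_
    all_goals
      refine le_antisymm ?_ zero_le
      rw [hμ, Measure.restrict_apply (measurableSet_singleton _)]
      refine le_trans (measure_mono Set.inter_subset_left) ?_
      simp [Real.volume_singleton]
  simp [hsec]

lemma qhl_pointwise {X : Type*} [MetricSpace X]
    (f : X → ℝ) (hf : Continuous f) (xi : ℕ → X) (n : ℕ) (hn : 0 < n)
    (t : ℝ) (x : X) (ht : 0 < t)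
    (hpS : ¬ ∃ i j : Fin n, dist x (xi i) ≠ dist x (xi j) ∧
      f (xi i) + dist x (xi i)^2/(2*t) = f (xi j) + dist x (xi j)^2/(2*t)) :
    HasDerivAt (fun s => QHL f xi n s x) (deriv (fun s => QHL f xi n s x) t) t ∧
      deriv (fun s => QHL f xi n s x) t +
        (1/2) * (asympLip (fun y => QHL f xi n t y) x) ^ 2 ≤ 0 := by
  push_neg at hpS
  haveI : Nonempty (Fin n) := ⟨⟨0, hn⟩⟩
  have hne : (Finset.univ : Finset (Fin n)).Nonempty := ⟨⟨0, hn⟩, Finset.mem_univ _⟩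
  -- minimizing index
  obtain ⟨I, -, hI⟩ := Finset.exists_mem_eq_inf' hne
    (fun i : Fin n => f (xi i) + dist x (xi i) ^ 2 / (2 * t))
  have hImin : ∀ i : Fin n, f (xi I) + dist x (xi I) ^ 2 / (2 * t)
      ≤ f (xi i) + dist x (xi i) ^ 2 / (2 * t) :=
    fun i => hI ▸ Finset.inf'_le _ (Finset.mem_univ i)
  set d : ℝ := dist x (xi I) with hd
  -- active branches coincide
  have hactive : ∀ i : Fin n,
      f (xi i) + dist x (xi i) ^ 2 / (2 * t) = f (xi I) + dist x (xi I) ^ 2 / (2 * t) →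
      dist x (xi i) = d ∧ f (xi i) = f (xi I) := by
    intro i hi
    have hdist : dist x (xi i) = dist x (xi I) := by
      by_contra hc
      exact absurd hi (hpS i I hc)
    refine ⟨hdist, ?_⟩
    rw [hdist] at hi
    linarith [hi]
  -- Step B : eventual equality in s
  have hcont : ∀ i : Fin n, ContinuousAt
      (fun s : ℝ => f (xi i) + dist x (xi i) ^ 2 / (2 * s)) t := by
    intro i
    exact (continuousAt_const.add (continuousAt_const.div
      (continuousAt_const.mul continuousAt_id) (by positivity)))
  have hev : ∀ᶠ s in 𝓝 t, QHL f xi n s x = f (xi I) + d ^ 2 / (2 * s) := by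
    have hev1 : ∀ᶠ s in 𝓝 t, ∀ i : Fin n,
        f (xi I) + d ^ 2 / (2 * s) ≤ f (xi i) + dist x (xi i) ^ 2 / (2 * s) := by
      rw [eventually_all]
      intro i
      rcases eq_or_lt_of_le (hImin i) with heq | hlt
      · obtain ⟨hd1, hf1⟩ := hactive i heq.symm
        filter_upwards with s
        rw [hd1, hf1]
      · exact ((hcont I).eventually_lt (hcont i) hlt).mono fun s hs => hs.le
    filter_upwards [hev1] with s hs
    refine le_antisymm ?_ ?_
    · exact ciInf_le (Finite.bddBelow_range _) I
    · exact le_ciInf hs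
  have hbr : HasDerivAt (fun s : ℝ => f (xi I) + d ^ 2 / (2 * s)) (-(d ^ 2)/(2*t^2)) t := by
    have h1 : HasDerivAt (fun s : ℝ => 2*s) 2 t := by
      simpa using (hasDerivAt_id t).const_mul 2
    have h2 := (hasDerivAt_const t (d^2)).div h1 (by positivity)
    have h3 := h2.const_add (f (xi I))
    convert h3 using 1
    · rfl
    · rfl
    · rfl
    · ring
  have hQder : HasDerivAt (fun s => QHL f xi n s x) (-(d ^ 2)/(2*t^2)) t :=
    hbr.congr_of_eventuallyEq hev
  have hderiv : deriv (fun s => QHL f xi n s x) t = -(d ^ 2)/(2*t^2) := hQder.deriv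
  refine ⟨hderiv ▸ hQder, ?_⟩
  -- Step D : asympLip bound
  set 𝒦 : Set ℝ := {K : ℝ | 0 ≤ K ∧ ∃ r > (0:ℝ),
    LipschitzOnWith (Real.toNNReal K) (fun y => QHL f xi n t y) (Metric.ball x r)} with h𝒦
  -- spatial exclusion of inactive branches
  have hev2 : ∀ᶠ y in 𝓝 x, ∀ i : Fin n,
      f (xi i) + dist x (xi i) ^ 2 / (2 * t) ≠ f (xi I) + dist x (xi I) ^ 2 / (2 * t) →
      f (xi I) + dist y (xi I) ^ 2 / (2 * t) ≤ f (xi i) + dist y (xi i) ^ 2 / (2 * t) := by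
    rw [eventually_all]
    intro i
    by_cases hi : f (xi i) + dist x (xi i) ^ 2 / (2 * t) = f (xi I) + dist x (xi I) ^ 2 / (2 * t)
    · filter_upwards with y hc
      exact absurd hi hc
    · have hlt : f (xi I) + dist x (xi I) ^ 2 / (2 * t)
          < f (xi i) + dist x (xi i) ^ 2 / (2 * t) := lt_of_le_of_ne (hImin i) (Ne.symm hi)
      have hcy : ∀ j : Fin n, ContinuousAt
          (fun y : X => f (xi j) + dist y (xi j) ^ 2 / (2 * t)) x := by
        intro j
        exact (continuousAt_const.add (((continuous_id.dist continuous_const).pow 2).continuousAt.div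
          continuousAt_const (by positivity)))
      exact ((hcy I).eventually_lt (hcy i) hlt).mono fun y hy _ => hy.le
  obtain ⟨r₁, hr₁, hball⟩ := Metric.eventually_nhds_iff_ball.1 hev2
  -- the active finset
  set A : Finset (Fin n) := Finset.univ.filter
    (fun i => f (xi i) + dist x (xi i) ^ 2 / (2 * t) = f (xi I) + dist x (xi I) ^ 2 / (2 * t))
    with hA
  have hIA : I ∈ A := by simp [hA]
  have hAne : A.Nonempty := ⟨I, hIA⟩
  -- representation of QHL on the small ball
  have hrep : ∀ y ∈ ball x r₁, QHL f xi n t y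
      = A.inf' hAne (fun i => f (xi i) + dist y (xi i) ^ 2 / (2 * t)) := by
    intro y hy
    refine le_antisymm ?_ ?_
    · obtain ⟨j, hjA, hj⟩ := A.exists_mem_eq_inf' hAne
        (fun i => f (xi i) + dist y (xi i) ^ 2 / (2 * t))
      rw [hj]
      exact ciInf_le (Finite.bddBelow_range _) j
    · refine le_ciInf fun i => ?_
      by_cases hi : f (xi i) + dist x (xi i) ^ 2 / (2 * t)
          = f (xi I) + dist x (xi I) ^ 2 / (2 * t)
      · exact A.inf'_le _ (by simp [hA, hi])
      · exact le_trans (A.inf'_le _ hIA) (hball y hy i hi)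
  -- Lipschitz constants
  have hKmem : ∀ r : ℝ, 0 < r → r ≤ r₁ → ((d + r)/t) ∈ 𝒦 := by
    intro r hr hrr
    have hdr0 : 0 ≤ (d + r)/t := by positivity
    refine ⟨hdr0, r, hr, LipschitzOnWith.of_dist_le_mul fun y hy z hz => ?_⟩
    have hy1 : y ∈ ball x r₁ := lt_of_lt_of_le (mem_ball.1 hy) hrr
    have hz1 : z ∈ ball x r₁ := lt_of_lt_of_le (mem_ball.1 hz) hrr
    rw [Real.dist_eq, hrep y hy1, hrep z hz1, Real.coe_toNNReal _ hdr0]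
    apply abs_inf'_sub_inf'_le
    intro i hiA
    obtain ⟨hdi, -⟩ := hactive i (by simpa [hA] using hiA)
    have hyb : dist y (xi i) ≤ d + r := by
      have hyx : dist y x < r := mem_ball.1 hy
      calc dist y (xi i) ≤ dist y x + dist x (xi i) := dist_triangle _ _ _
        _ ≤ r + d := add_le_add hyx.le (le_of_eq hdi)
        _ = d + r := by ring
    have hzb : dist z (xi i) ≤ d + r := by
      have hzx : dist z x < r := mem_ball.1 hz
      calc dist z (xi i) ≤ dist z x + dist x (xi i) := dist_triangle _ _ _
        _ ≤ r + d := add_le_add hzx.le (le_of_eq hdi)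
        _ = d + r := by ring
    have hkey : |(f (xi i) + dist y (xi i) ^ 2 / (2 * t)) -
        (f (xi i) + dist z (xi i) ^ 2 / (2 * t))|
        = |dist y (xi i) ^ 2 - dist z (xi i) ^ 2| / (2*t) := by
      rw [show (f (xi i) + dist y (xi i) ^ 2 / (2 * t)) -
          (f (xi i) + dist z (xi i) ^ 2 / (2 * t))
          = (dist y (xi i) ^ 2 - dist z (xi i) ^ 2)/(2*t) by ring,
        abs_div, abs_of_pos (show (0:ℝ) < 2*t by positivity)]
    rw [hkey]
    have h1 : |dist y (xi i) - dist z (xi i)| ≤ dist y z := abs_dist_sub_le _ _ _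
    have h2 : |dist y (xi i) ^ 2 - dist z (xi i) ^ 2| ≤ dist y z * (2*(d+r)) := by
      have hfac : dist y (xi i) ^ 2 - dist z (xi i) ^ 2
          = (dist y (xi i) - dist z (xi i)) * (dist y (xi i) + dist z (xi i)) := by ring
      have hsum0 : (0:ℝ) ≤ dist y (xi i) + dist z (xi i) := by positivity
      rw [hfac, abs_mul, abs_of_nonneg hsum0]
      nlinarith [abs_nonneg (dist y (xi i) - dist z (xi i)), dist_nonneg (x := y) (y := z)]
    calc |dist y (xi i) ^ 2 - dist z (xi i) ^ 2| / (2*t) ≤ dist y z * (2*(d+r)) / (2*t) := by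
          gcongr
      _ = (d + r)/t * dist y z := by field_simp
  have hbdd : BddBelow 𝒦 := ⟨0, fun K hK => hK.1⟩
  have h𝒦ne : 𝒦.Nonempty := ⟨(d + r₁)/t, hKmem r₁ hr₁ le_rfl⟩
  have hL0 : 0 ≤ asympLip (fun y => QHL f xi n t y) x := le_csInf h𝒦ne fun K hK => hK.1
  have hLle : asympLip (fun y => QHL f xi n t y) x ≤ d/t := by
    refine le_of_forall_pos_le_add fun ε hε => ?_
    have hrpos : 0 < min r₁ (ε*t) := lt_min hr₁ (by positivity)
    have hle := csInf_le hbdd (hKmem _ hrpos (min_le_left _ _))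
    refine hle.trans ?_
    rw [add_div]
    have : min r₁ (ε*t) / t ≤ ε := by
      rw [div_le_iff₀ ht]
      exact min_le_right _ _
    linarith
  rw [hderiv]
  have hsq : (asympLip (fun y => QHL f xi n t y) x) ^ 2 ≤ (d/t)^2 := by
    exact pow_le_pow_left₀ hL0 hLle 2
  have hfin : -(d ^ 2)/(2*t^2) + (1/2) * (d/t)^2 = 0 := by
    field_simp
    ring
  linarith

/-- On a metric space of finite diameter with finite measure, the discrete Hopf–Lax
function is locally Lipschitz on `(0,∞) × X` and is an a.e. subsolution of
`∂_t Q + ½ Lip_a(Q)² ≤ 0`. -/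
theorem stmt18 {X : Type*} [MetricSpace X] [MeasurableSpace X] [BorelSpace X]
    (hdiam : Bornology.IsBounded (Set.univ : Set X))
    (m : Measure X) [IsFiniteMeasure m]
    (f : X → ℝ) (hf : Continuous f) (hfb : ∃ C, ∀ x, |f x| ≤ C)
    (xi : ℕ → X) (n : ℕ) (hn : 0 < n) :
    (∀ t₀ : ℝ, 0 < t₀ → ∀ x₀ : X, ∃ ε > (0:ℝ), ∃ K : ℝ≥0,
      LipschitzOnWith K (fun p : ℝ × X => QHL f xi n p.1 p.2)
        (Metric.ball (t₀, x₀) ε ∩ (Set.Ioi (0:ℝ) ×ˢ Set.univ))) ∧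
    (∀ᵐ p ∂((volume.restrict (Set.Ioi (0:ℝ))).prod m),
      HasDerivAt (fun s => QHL f xi n s p.2)
        (deriv (fun s => QHL f xi n s p.2) p.1) p.1 ∧
      deriv (fun s => QHL f xi n s p.2) p.1 +
        (1/2) * (asympLip (fun y => QHL f xi n p.1 y) p.2) ^ 2 ≤ 0) := by
  constructor
  · intro t₀ ht₀ x₀
    obtain ⟨C0, hC0⟩ := Metric.isBounded_iff.1 hdiam
    set C : ℝ := max C0 0 with hCdef
    have hC : ∀ a b : X, dist a b ≤ C := fun a b =>
      le_trans (hC0 (mem_univ a) (mem_univ b)) (le_max_left _ _)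
    have hCnn : 0 ≤ C := le_max_right _ _
    set τ : ℝ := t₀/2 with hτdef
    have hτ : 0 < τ := by positivity
    set k : ℝ := C/τ + C^2/(2*(τ*τ)) with hkdef
    have hk0 : 0 ≤ k := by positivity
    refine ⟨τ, hτ, k.toNNReal, LipschitzOnWith.of_dist_le_mul fun p hp q hq => ?_⟩
    have hp1 : τ < p.1 := by
      have := hp.1
      rw [mem_ball, Prod.dist_eq] at this
      have h1 : dist p.1 t₀ < τ := lt_of_le_of_lt (le_max_left _ _) this
      rw [Real.dist_eq, abs_lt] at h1
      simp only [hτdef] at h1 ⊢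
      linarith [h1.1]
    have hq1 : τ < q.1 := by
      have := hq.1
      rw [mem_ball, Prod.dist_eq] at this
      have h1 : dist q.1 t₀ < τ := lt_of_le_of_lt (le_max_left _ _) this
      rw [Real.dist_eq, abs_lt] at h1
      simp only [hτdef] at h1 ⊢
      linarith [h1.1]
    rw [Real.dist_eq, Real.coe_toNNReal _ hk0, qhl_inf' f xi n hn, qhl_inf' f xi n hn]
    apply abs_inf'_sub_inf'_le
    intro i _
    have hstep : |(f (xi i) + dist p.2 (xi i) ^ 2 / (2 * p.1)) -
        (f (xi i) + dist q.2 (xi i) ^ 2 / (2 * q.1))|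
        = |dist p.2 (xi i) ^ 2 / (2 * p.1) - dist q.2 (xi i) ^ 2 / (2 * q.1)| := by
      ring_nf
    rw [hstep]
    have hbb := hl_branch_bound (A := dist p.2 (xi i) ^ 2) (B := dist q.2 (xi i) ^ 2)
      (C := C) hτ hp1.le hq1.le (by positivity) (by
        have := hC q.2 (xi i); nlinarith [dist_nonneg (x := q.2) (y := xi i)])
    refine hbb.trans ?_
    -- |d_p^2 - d_q^2| ≤ 2*C*dist p.2 q.2
    have hdd : |dist p.2 (xi i) ^ 2 - dist q.2 (xi i) ^ 2| ≤ 2*C*dist p.2 q.2 := by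
      have h1 : |dist p.2 (xi i) - dist q.2 (xi i)| ≤ dist p.2 q.2 := abs_dist_sub_le _ _ _
      have h2 : dist p.2 (xi i) + dist q.2 (xi i) ≤ 2*C := by
        have := hC p.2 (xi i); have := hC q.2 (xi i); linarith
      have : dist p.2 (xi i) ^ 2 - dist q.2 (xi i) ^ 2
          = (dist p.2 (xi i) - dist q.2 (xi i)) * (dist p.2 (xi i) + dist q.2 (xi i)) := by ring
      have h3 : (0:ℝ) ≤ dist p.2 (xi i) + dist q.2 (xi i) := by positivity
      rw [this, abs_mul, abs_of_nonneg h3]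
      nlinarith [abs_nonneg (dist p.2 (xi i) - dist q.2 (xi i)), dist_nonneg (x := p.2) (y := q.2)]
    have hts : |p.1 - q.1| ≤ dist p q := by
      rw [Prod.dist_eq]; exact le_trans (le_of_eq (Real.dist_eq _ _).symm) (le_max_left _ _)
    have hxy : dist p.2 q.2 ≤ dist p q := by
      rw [Prod.dist_eq]; exact le_max_right _ _
    have hd0 : (0:ℝ) ≤ dist p q := dist_nonneg
    calc |dist p.2 (xi i) ^ 2 - dist q.2 (xi i) ^ 2|/(2*τ) + C^2*|p.1-q.1|/(2*(τ*τ))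
        ≤ (2*C*dist p q)/(2*τ) + C^2*(dist p q)/(2*(τ*τ)) := by
          gcongr
          exact le_trans hdd (by nlinarith)
      _ = k * dist p q := by rw [hkdef]; field_simp
  · have hnull := qhl_badset_null m f xi n
    have h1 : ∀ᵐ p ∂((volume.restrict (Set.Ioi (0:ℝ))).prod m),
        p ∉ {p : ℝ × X | ∃ i j : Fin n, dist p.2 (xi i) ≠ dist p.2 (xi j) ∧
          f (xi i) + dist p.2 (xi i)^2/(2*p.1) = f (xi j) + dist p.2 (xi j)^2/(2*p.1)} := by
      rw [ae_iff]
      simpa using hnull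
    have h2 : ∀ᵐ p ∂((volume.restrict (Set.Ioi (0:ℝ))).prod m), 0 < p.1 := by
      rw [ae_iff]
      have hset : {p : ℝ × X | ¬ 0 < p.1} = (Set.Iic (0:ℝ)) ×ˢ (Set.univ : Set X) := by
        ext p; simp [not_lt]
      rw [hset, Measure.prod_prod]
      have : (volume.restrict (Set.Ioi (0:ℝ))) (Set.Iic 0) = 0 := by
        rw [Measure.restrict_apply measurableSet_Iic, Set.Iic_inter_Ioi, Set.Ioc_self,
          measure_empty]
      rw [this, zero_mul]
    filter_upwards [h1, h2] with p hp1 hp2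
    exact qhl_pointwise f hf xi n hn p.1 p.2 hp2 hp1
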